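/- Suppose X₁, ..., X_n are independent random vectors, Π is a uniformly random permutation of {1,...,n} independent of them, and Y = (X_{Π⁻¹(1)}, ..., X_{Π⁻¹(n)}). Suppose S(X_u) is a statistic such that for each u, conditionally on S(X_u) = s, the distribution of X_u does not depend on u (i.e., P(X_u = x | S(X_u) = s) is the same function of (x,s) for all u). Then Π and Y are conditionally independent given (S(X_{Π⁻¹(1)}), ..., S(X_{Π⁻¹(n)})). -/

import Mathlib

open scoped Classical BigOperators

/-- Sufficiency lemma: let `X₁,...,X_n` be independent with pmfs `f u`, let `Π` be an
independent uniform permutation, and `Y = (X_{Π⁻¹(1)},...,X_{Π⁻¹(n)})`. If, conditionally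
on `S(X_u) = s`, the distribution of `X_u` does not depend on `u`, then `Π` and `Y` are
conditionally independent given the permuted statistics `(S(X_{Π⁻¹(1)}),...,S(X_{Π⁻¹(n)}))`,
expressed by the factorization `P(Π=π, Y=y)·P(Svec = S∘y) = P(Π=π, Svec = S∘y)·P(Y=y)`. -/
theorem sufficiency_of_statistic
    (n : ℕ) (𝒳 𝒮 : Type) [Fintype 𝒳] [DecidableEq 𝒳] [DecidableEq 𝒮]
    (f : Fin n → 𝒳 → ℝ) (S : 𝒳 → 𝒮)
    (hfnn : ∀ u x, 0 ≤ f u x) (hfsum : ∀ u, ∑ x, f u x = 1)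
    (hcond : ∀ u v x,
      f u x * (∑ x' ∈ Finset.univ.filter (fun x' => S x' = S x), f v x')
        = f v x * (∑ x' ∈ Finset.univ.filter (fun x' => S x' = S x), f u x')) :
    ∀ (π : Equiv.Perm (Fin n)) (y : Fin n → 𝒳),
      (fun (Pr : (((Fin n → 𝒳) × Equiv.Perm (Fin n)) → Prop) → ℝ) =>
        Pr (fun ω => ω.2 = π ∧ (fun j => ω.1 (ω.2⁻¹ j)) = y) *
          Pr (fun ω => (fun j => S (ω.1 (ω.2⁻¹ j))) = S ∘ y)
        = Pr (fun ω => ω.2 = π ∧ (fun j => S (ω.1 (ω.2⁻¹ j))) = S ∘ y) *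
          Pr (fun ω => (fun j => ω.1 (ω.2⁻¹ j)) = y))
      (fun E => ∑ ω : (Fin n → 𝒳) × Equiv.Perm (Fin n),
        if E ω then (∏ u, f u (ω.1 u)) / (Nat.factorial n : ℝ) else 0) := by
  intro π y
  simp only
  set N : ℝ := (Nat.factorial n : ℝ) with hN
  set T : Fin n → 𝒮 → ℝ :=
    fun u s => ∑ x' ∈ Finset.univ.filter (fun x' => S x' = s), f u x' with hT
  have hTnn : ∀ u s, 0 ≤ T u s := fun u s => Finset.sum_nonneg fun x _ => hfnn u x
  have hfleT : ∀ u x, f u x ≤ T u (S x) := fun u x =>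
    Finset.single_le_sum (fun i _ => hfnn u i) (by simp)
  set g : 𝒳 → ℝ := fun x =>
    if (∑ v, T v (S x)) = 0 then 0 else (∑ v, f v x) / (∑ v, T v (S x)) with hg
  have hfg : ∀ u x, f u x = g x * T u (S x) := by
    intro u x
    by_cases hD : (∑ v, T v (S x)) = 0
    · have hT0 : T u (S x) = 0 :=
        (Finset.sum_eq_zero_iff_of_nonneg (fun v _ => hTnn v (S x))).mp hD u (Finset.mem_univ u)
      have hf0 : f u x = 0 := le_antisymm (hT0 ▸ hfleT u x) (hfnn u x)
      simp [hg, hD, hf0]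
    · have key : f u x * (∑ v, T v (S x)) = (∑ v, f v x) * T u (S x) := by
        rw [Finset.mul_sum, Finset.sum_mul]
        exact Finset.sum_congr rfl fun v _ => hcond u v x
      rw [hg]
      simp only [hD, if_false]
      rw [div_mul_eq_mul_div, eq_div_iff hD]
      linarith [key]
  -- characterize the conditions
  have hc : ∀ (σ : Equiv.Perm (Fin n)) (x : Fin n → 𝒳),
      ((fun j => x (σ⁻¹ j)) = y) ↔ x = fun u => y (σ u) := by
    intro σ x
    constructor
    · intro h; funext u
      have := congrFun h (σ u); simpa using this
    · intro h; subst h; funext j; simp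
  have hcS : ∀ (σ : Equiv.Perm (Fin n)) (x : Fin n → 𝒳),
      ((fun j => S (x (σ⁻¹ j))) = S ∘ y) ↔
        x ∈ Fintype.piFinset (fun u => Finset.univ.filter (fun x' => S x' = S (y (σ u)))) := by
    intro σ x
    rw [Fintype.mem_piFinset]
    constructor
    · intro h u
      have := congrFun h (σ u)
      simp only [Function.comp] at this
      simp only [Finset.mem_filter, Finset.mem_univ, true_and]
      simpa using this
    · intro h; funext j
      have := h (σ⁻¹ j)
      simp only [Finset.mem_filter, Finset.mem_univ, true_and] at this
      simpa using this
  -- inner x-sums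
  have hx1 : ∀ σ : Equiv.Perm (Fin n),
      (∑ x : Fin n → 𝒳, @ite ℝ ((fun j => x (σ⁻¹ j)) = y) (Classical.propDecidable _) ((∏ u, f u (x u)) / N) 0)
        = (∏ u, f u (y (σ u))) / N := by
    intro σ
    simp only [hc σ]
    rw [Finset.sum_ite_eq' Finset.univ (fun u => y (σ u)) (fun x => (∏ u, f u (x u)) / N)]
    simp
  have hx2 : ∀ σ : Equiv.Perm (Fin n),
      (∑ x : Fin n → 𝒳, @ite ℝ ((fun j => S (x (σ⁻¹ j))) = S ∘ y) (Classical.propDecidable _) ((∏ u, f u (x u)) / N) 0)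
        = (∏ u, T u (S (y (σ u)))) / N := by
    intro σ
    simp only [hcS σ]
    rw [Finset.sum_ite_mem, Finset.univ_inter, ← Finset.sum_div, ← Finset.prod_univ_sum]
  -- the four probabilities
  have h1 : (∑ ω : (Fin n → 𝒳) × Equiv.Perm (Fin n),
      @ite ℝ (ω.2 = π ∧ (fun j => ω.1 (ω.2⁻¹ j)) = y) (Classical.propDecidable _) ((∏ u, f u (ω.1 u)) / N) 0)
        = (∏ u, f u (y (π u))) / N := by
    rw [Fintype.sum_prod_type, Finset.sum_comm]
    rw [Finset.sum_eq_single π]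
    · rw [← hx1 π]
      apply Finset.sum_congr rfl
      intro x _
      by_cases hQ : (fun j => x (π⁻¹ j)) = y
      · simp [hQ]
      · simp [hQ]
    · intro σ _ hσ
      apply Finset.sum_eq_zero
      intro x _
      simp [hσ]
    · simp
  have h3 : (∑ ω : (Fin n → 𝒳) × Equiv.Perm (Fin n),
      @ite ℝ (ω.2 = π ∧ (fun j => S (ω.1 (ω.2⁻¹ j))) = S ∘ y) (Classical.propDecidable _) ((∏ u, f u (ω.1 u)) / N) 0)
        = (∏ u, T u (S (y (π u)))) / N := by
    rw [Fintype.sum_prod_type, Finset.sum_comm]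
    rw [Finset.sum_eq_single π]
    · rw [← hx2 π]
      apply Finset.sum_congr rfl
      intro x _
      by_cases hQ : (fun j => S (x (π⁻¹ j))) = S ∘ y
      · simp [hQ]
      · simp [hQ]
    · intro σ _ hσ
      apply Finset.sum_eq_zero
      intro x _
      simp [hσ]
    · simp
  have h2 : (∑ ω : (Fin n → 𝒳) × Equiv.Perm (Fin n),
      @ite ℝ ((fun j => S (ω.1 (ω.2⁻¹ j))) = S ∘ y) (Classical.propDecidable _) ((∏ u, f u (ω.1 u)) / N) 0)
        = (∑ σ : Equiv.Perm (Fin n), ∏ u, T u (S (y (σ u)))) / N := by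
    rw [Fintype.sum_prod_type, Finset.sum_comm, Finset.sum_div]
    exact Finset.sum_congr rfl fun σ _ => hx2 σ
  have h4 : (∑ ω : (Fin n → 𝒳) × Equiv.Perm (Fin n),
      @ite ℝ ((fun j => ω.1 (ω.2⁻¹ j)) = y) (Classical.propDecidable _) ((∏ u, f u (ω.1 u)) / N) 0)
        = (∑ σ : Equiv.Perm (Fin n), ∏ u, f u (y (σ u))) / N := by
    rw [Fintype.sum_prod_type, Finset.sum_comm, Finset.sum_div]
    exact Finset.sum_congr rfl fun σ _ => hx1 σ
  rw [h1, h2, h3, h4]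
  -- factorization
  have hfac : ∀ σ : Equiv.Perm (Fin n),
      (∏ u, f u (y (σ u))) = (∏ u, g (y u)) * ∏ u, T u (S (y (σ u))) := by
    intro σ
    rw [← Equiv.prod_comp σ (fun u => g (y u)), ← Finset.prod_mul_distrib]
    exact Finset.prod_congr rfl fun u _ => hfg u (y (σ u))
  simp only [hfac]
  rw [← Finset.mul_sum]
  ring
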